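/- The unit interval [0,1] with the operation m(x,y)=(x+y)/2 is an iterable midpoint algebra: m is idempotent, commutative, and medial, and for every set X and every map s : X → X × [0,1] there is a unique u : X → [0,1] with u(x) = (u(π₁ s(x)) + π₂ s(x))/2 for all x. -/
import Mathlib


noncomputable def midI (x y : Set.Icc (0:ℝ) 1) : Set.Icc (0:ℝ) 1 :=
  ⟨(x.1 + y.1) / 2, ⟨by nlinarith [x.2.1, y.2.1], by nlinarith [x.2.2, y.2.2]⟩⟩

/-- The unit interval `[0,1]` with `m(x,y) = (x+y)/2` is an iterable midpoint
algebra: `m` is idempotent, commutative and medial, and every `s : X → X × [0,1]`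
admits a unique iteration `u` with `u x = (u (s x).1 + (s x).2)/2`. -/
theorem interval_iterable_midpoint_algebra :
    (∀ x, midI x x = x) ∧
    (∀ x y, midI x y = midI y x) ∧
    (∀ a b c d, midI (midI a b) (midI c d) = midI (midI a c) (midI b d)) ∧
    (∀ (X : Type) (s : X → X × Set.Icc (0:ℝ) 1),
      ∃! u : X → Set.Icc (0:ℝ) 1, ∀ x, u x = midI (u (s x).1) (s x).2) := by
  refine ⟨?_, ?_, ?_, ?_⟩
  · intro x; apply Subtype.ext; simp [midI]
  · intro x y; apply Subtype.ext; simp [midI]; ring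
  · intro a b c d; apply Subtype.ext; simp [midI]; ring
  · intro X s
    set f : X → X := fun x => (s x).1 with hf
    set g : X → ℝ := fun x => ((s x).2 : ℝ) with hgdef
    have hg0 : ∀ x, 0 ≤ g x := fun x => (s x).2.2.1
    have hg1 : ∀ x, g x ≤ 1 := fun x => (s x).2.2.2
    have hgeo : Summable (fun n : ℕ => (1/2:ℝ)^(n+1)) := by
      have := summable_geometric_two.mul_left (1/2 : ℝ)
      simpa [pow_succ, mul_comm] using this
    have hsum : ∀ x, Summable (fun n : ℕ => g (f^[n] x) / 2^(n+1)) := by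
      intro x
      refine Summable.of_nonneg_of_le (fun n => ?_) (fun n => ?_) hgeo
      · exact div_nonneg (hg0 _) (by positivity)
      · rw [div_le_iff₀ (by positivity)]
        calc g (f^[n] x) ≤ 1 := hg1 _
          _ ≤ (1/2:ℝ)^(n+1) * 2^(n+1) := by
              rw [div_pow, one_pow, div_mul_cancel₀]
              positivity
    set uv : X → ℝ := fun x => ∑' n : ℕ, g (f^[n] x) / 2^(n+1) with huv
    have h0 : ∀ x, 0 ≤ uv x := by
      intro x; exact tsum_nonneg (fun n => div_nonneg (hg0 _) (by positivity))
    have h1 : ∀ x, uv x ≤ 1 := by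
      intro x
      have hle : uv x ≤ ∑' n : ℕ, (1/2:ℝ)^(n+1) := by
        refine Summable.tsum_le_tsum (fun n => ?_) (hsum x) hgeo
        rw [div_le_iff₀ (by positivity)]
        calc g (f^[n] x) ≤ 1 := hg1 _
          _ ≤ (1/2:ℝ)^(n+1) * 2^(n+1) := by
              rw [div_pow, one_pow, div_mul_cancel₀]
              positivity
      have : ∑' n : ℕ, (1/2:ℝ)^(n+1) = 1 := by
        have h2 : ∑' n : ℕ, (1/2:ℝ)^(n+1) = (1/2) * ∑' n : ℕ, (1/2:ℝ)^n := by
          rw [← tsum_mul_left]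
          congr 1; funext n; rw [pow_succ]; ring
        rw [h2, tsum_geometric_two]; norm_num
      linarith
    have hrec : ∀ x, uv x = (uv (f x) + g x) / 2 := by
      intro x
      have := Summable.tsum_eq_zero_add (hsum x)
      rw [huv]
      simp only []
      rw [this]
      have h3 : ∀ n : ℕ, g (f^[n+1] x) / 2^(n+1+1) = (1/2) * (g (f^[n] (f x)) / 2^(n+1)) := by
        intro n
        rw [Function.iterate_succ_apply]
        ring
      simp only [h3]
      rw [tsum_mul_left]
      simp only [Function.iterate_zero_apply, pow_one]
      ring
    refine ⟨fun x => ⟨uv x, h0 x, h1 x⟩, ?_, ?_⟩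
    · intro x
      apply Subtype.ext
      show uv x = (uv (f x) + g x) / 2
      exact hrec x
    · intro v hv
      funext x
      apply Subtype.ext
      show (v x : ℝ) = uv x
      have hvrec : ∀ y, (v y : ℝ) = ((v (f y) : ℝ) + g y) / 2 := by
        intro y
        have := hv y
        have := congrArg Subtype.val this
        simpa [midI] using this
      have key : ∀ n : ℕ, ∀ y, |(v y : ℝ) - uv y| ≤ (1/2:ℝ)^n := by
        intro n
        induction n with
        | zero =>
          intro y
          simp only [pow_zero]
          have := (v y).2.1; have := (v y).2.2
          have := h0 y; have := h1 y
          rw [abs_le]; constructor <;> linarith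
        | succ n ih =>
          intro y
          rw [hvrec y, hrec y]
          have : ((v (f y) : ℝ) + g y) / 2 - (uv (f y) + g y) / 2
              = ((v (f y) : ℝ) - uv (f y)) / 2 := by ring
          rw [this, abs_div, abs_of_nonneg (by norm_num : (0:ℝ) ≤ 2), pow_succ]
          have := ih (f y)
          linarith
      have htend : Filter.Tendsto (fun n : ℕ => (1/2:ℝ)^n) Filter.atTop (nhds 0) :=
        tendsto_pow_atTop_nhds_zero_of_lt_one (by norm_num) (by norm_num)
      have : |(v x : ℝ) - uv x| ≤ 0 :=
        ge_of_tendsto' htend (fun n => key n x)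
      have h4 : (v x : ℝ) - uv x = 0 := by
        have := abs_nonneg ((v x : ℝ) - uv x)
        have : |(v x : ℝ) - uv x| = 0 := le_antisymm (by assumption) (by linarith)
        exact abs_eq_zero.mp this
      linarith
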